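/- Uniform short-time Green function bound on the directed triangular lattice (the bound on the term I in the proof of Proposition 3.12 of the paper): For y in the triangular lattice ℤ + ℤ·τ and n ∈ ℕ, let p_n(y) = 3^{−n} · card{ (s₁, …, s_n) ∈ {1, τ, τ²}ⁿ : s₁ + ⋯ + s_n = y } be the probability that the simple random walk on the directed triangular lattice started at 0 is at y after n steps. Then there exists a constant C > 0 such that for every y ∈ ℤ + ℤ·τ, Σ_{n=0}^{⌊|y|²⌋} p_n(y) ≤ C. -/

import Mathlib

/-- The primitive third root of unity `τ = e^{2πi/3}`. -/
noncomputable def triTau : ℂ := Complex.exp (2 * Real.pi * Complex.I / 3)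

/-- `p n y`: the probability that the simple random walk on the directed triangular
lattice (i.i.d. steps uniform on `{1, τ, τ²}`) started at `0` is at `y` after `n`
steps. -/
noncomputable def triWalkProb (n : ℕ) (y : ℂ) : ℝ :=
  (3 : ℝ) ^ (-(n : ℤ)) *
    Nat.card { s : Fin n → Fin 3 // ∑ i, triTau ^ ((s i : ℕ)) = y }



lemma triTau_eq : triTau = Complex.exp ((2 * Real.pi / 3 : ℝ) * Complex.I) := by
  unfold triTau; push_cast; ring_nf

lemma triTau_re : triTau.re = -(1/2) := by
  rw [triTau_eq, Complex.exp_ofReal_mul_I_re]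
  have : 2 * Real.pi / 3 = Real.pi - Real.pi / 3 := by ring
  rw [this, Real.cos_pi_sub, Real.cos_pi_div_three]

lemma triTau_im : triTau.im = Real.sqrt 3 / 2 := by
  rw [triTau_eq, Complex.exp_ofReal_mul_I_im]
  have : 2 * Real.pi / 3 = Real.pi - Real.pi / 3 := by ring
  rw [this, Real.sin_pi_sub, Real.sin_pi_div_three]

lemma triTau_im_pos : 0 < triTau.im := by
  rw [triTau_im]; positivity

lemma triTau_cube : triTau ^ 3 = 1 := by
  rw [triTau_eq, ← Complex.exp_nat_mul]
  have : ((3:ℕ) : ℂ) * ((2 * Real.pi / 3 : ℝ) * Complex.I) = 2 * Real.pi * Complex.I := by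
    push_cast; ring
  rw [this, Complex.exp_two_pi_mul_I]

lemma triTau_ne_one : triTau ≠ 1 := by
  intro h
  have := triTau_im_pos
  rw [h] at this
  simp at this

lemma triTau_sq : triTau ^ 2 = -1 - triTau := by
  have h : (triTau - 1) * (triTau ^ 2 + triTau + 1) = triTau ^ 3 - 1 := by ring
  rw [triTau_cube, sub_self] at h
  have h2 : triTau - 1 ≠ 0 := sub_ne_zero.mpr triTau_ne_one
  have := (mul_eq_zero.mp h).resolve_left h2
  linear_combination this

lemma triTau_indep {x y : ℝ} (h : (x:ℂ) + (y:ℂ) * triTau = 0) : x = 0 ∧ y = 0 := by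
  have him : y = 0 ∨ triTau.im = 0 := by
    have := congrArg Complex.im h
    simpa [Complex.add_im, Complex.mul_im] using this
  have hy : y = 0 := him.resolve_right (ne_of_gt triTau_im_pos)
  subst hy
  have hx : x = 0 := by
    have := congrArg Complex.re h
    simpa [Complex.add_re, Complex.mul_re] using this
  exact ⟨hx, rfl⟩


open Finset Equiv

variable {n : ℕ}

/-- fiber counts -/
def fc (s : Fin n → Fin 3) (j : Fin 3) : ℕ := (Finset.univ.filter (fun i => s i = j)).card

lemma fc_sum (s : Fin n → Fin 3) : ∑ j, fc s j = n := by
  classical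
  have := Finset.card_eq_sum_card_fiberwise (f := s) (s := (Finset.univ : Finset (Fin n)))
    (t := Finset.univ) (fun x _ => Finset.mem_univ (s x))
  simpa [fc, Finset.card_univ] using this.symm

lemma fc_card (s : Fin n → Fin 3) (j : Fin 3) :
    Fintype.card {i // s i = j} = fc s j := by
  classical
  simp [fc, Fintype.card_subtype]

lemma sum_eq_fc (s : Fin n → Fin 3) :
    ∑ i, triTau ^ ((s i : ℕ)) = ∑ j : Fin 3, (fc s j : ℂ) * triTau ^ ((j : ℕ)) := by
  classical
  rw [← Finset.sum_fiberwise (Finset.univ : Finset (Fin n)) s (fun i => triTau ^ ((s i : ℕ)))]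
  refine Finset.sum_congr rfl fun j _ => ?_
  have : ∀ i ∈ Finset.univ.filter (fun i => s i = j), triTau ^ ((s i : ℕ)) = triTau ^ ((j:ℕ)) := by
    intro i hi
    rw [(Finset.mem_filter.mp hi).2]
  rw [Finset.sum_congr rfl this, Finset.sum_const, fc, nsmul_eq_mul]

set_option maxHeartbeats 1000000 in
lemma card_mul_le (s₀ : Fin n → Fin 3) :
    Nat.card {s : Fin n → Fin 3 // ∀ j, fc s j = fc s₀ j} * ∏ j : Fin 3, Nat.factorial (fc s₀ j) ≤ Nat.factorial n := by
  classical
  set B : Finset (Fin n → Fin 3) := Finset.univ.filter (fun s => ∀ j, fc s j = fc s₀ j) with hB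
  have hcard : Nat.card {s : Fin n → Fin 3 // ∀ j, fc s j = fc s₀ j} = B.card := by
    rw [Nat.card_eq_fintype_card, Fintype.card_subtype]
  rw [hcard]
  have hfib : ∀ s ∈ B, ∏ j : Fin 3, Nat.factorial (fc s₀ j) ≤
      (Finset.univ.filter (fun σ : Equiv.Perm (Fin n) => s₀ ∘ ⇑σ = s)).card := by
    intro s hs
    have hsB : ∀ j, fc s j = fc s₀ j := (Finset.mem_filter.mp hs).2
    -- a permutation carrying s₀ to s
    have e : ∀ j, {i // s i = j} ≃ {i // s₀ i = j} := fun j =>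
      Fintype.equivOfCardEq (by rw [fc_card, fc_card, hsB])
    set σ₀ : Equiv.Perm (Fin n) := Equiv.ofFiberEquiv e with hσ₀
    have hs₀σ₀ : s₀ ∘ ⇑σ₀ = s := funext fun a => Equiv.ofFiberEquiv_map e a
    -- the fiber over s is in bijection with the stabilizer of s₀
    have Eqv : {σ : Equiv.Perm (Fin n) // s₀ ∘ ⇑σ = s₀} ≃
        {σ : Equiv.Perm (Fin n) // s₀ ∘ ⇑σ = s} :=
      { toFun := fun g => ⟨σ₀.trans g.1, by
          funext a
          have := congrFun g.2 (σ₀ a)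
          simpa using this.trans (congrFun hs₀σ₀ a)⟩
        invFun := fun h => ⟨σ₀.symm.trans h.1, by
          funext a
          have h1 := congrFun h.2 (σ₀.symm a)
          have h2 := congrFun hs₀σ₀ (σ₀.symm a)
          simp only [Function.comp_apply] at h1 h2 ⊢
          simp only [Equiv.trans_apply]
          rw [h1, ← h2, Equiv.apply_symm_apply]⟩
        left_inv := fun g => by ext a; simp
        right_inv := fun h => by ext a; simp }
    have hstab : Fintype.card {σ : Equiv.Perm (Fin n) // s₀ ∘ ⇑σ = s₀} =
        ∏ j : Fin 3, Nat.factorial (Fintype.card {i // s₀ i = j}) := DomMulAct.stabilizer_card s₀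
    have : (Finset.univ.filter (fun σ : Equiv.Perm (Fin n) => s₀ ∘ ⇑σ = s)).card
        = ∏ j : Fin 3, Nat.factorial (fc s₀ j) := by
      rw [← Fintype.card_subtype, ← Fintype.card_congr Eqv, hstab]
      exact Finset.prod_congr rfl fun j _ => by rw [fc_card]
    rw [this]
  calc B.card * ∏ j : Fin 3, Nat.factorial (fc s₀ j)
      = B.card • ∏ j : Fin 3, Nat.factorial (fc s₀ j) := (smul_eq_mul _ _).symm
    _ ≤ ∑ s ∈ B, (Finset.univ.filter (fun σ : Equiv.Perm (Fin n) => s₀ ∘ ⇑σ = s)).card :=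
        Finset.card_nsmul_le_sum B _ _ hfib
    _ ≤ ∑ s : Fin n → Fin 3,
          (Finset.univ.filter (fun σ : Equiv.Perm (Fin n) => s₀ ∘ ⇑σ = s)).card :=
        Finset.sum_le_sum_of_subset (Finset.subset_univ B)
    _ = (Finset.univ : Finset (Equiv.Perm (Fin n))).card :=
        (Finset.card_eq_sum_card_fiberwise (f := fun σ : Equiv.Perm (Fin n) => s₀ ∘ ⇑σ) (t := Finset.univ) (fun σ _ => Finset.mem_univ _)).symm
    _ = Nat.factorial n := by rw [Finset.card_univ, Fintype.card_perm, Fintype.card_fin]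

lemma fc_relations {n : ℕ} {a b : ℤ} (s : Fin n → Fin 3)
    (h : ∑ i, triTau ^ ((s i : ℕ)) = (a:ℂ) + (b:ℂ) * triTau) :
    (fc s 0 : ℤ) - fc s 2 = a ∧ (fc s 1 : ℤ) - fc s 2 = b := by
  rw [sum_eq_fc, Fin.sum_univ_three] at h
  have h2 : triTau ^ ((2 : Fin 3) : ℕ) = -1 - triTau := by
    norm_num [triTau_sq]
  rw [h2] at h
  norm_num at h
  have key : ((((fc s 0 : ℝ) - fc s 2 - a) : ℝ) : ℂ)
      + ((((fc s 1 : ℝ) - fc s 2 - b) : ℝ) : ℂ) * triTau = 0 := by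
    push_cast
    linear_combination h
  obtain ⟨hx, hy⟩ := triTau_indep key
  constructor
  · have hx' : ((fc s 0 : ℝ)) - (fc s 2 : ℝ) = (a : ℝ) := by linarith
    exact_mod_cast hx'
  · have hy' : ((fc s 1 : ℝ)) - (fc s 2 : ℝ) = (b : ℝ) := by linarith
    exact_mod_cast hy'

/-! ### Nat entropy inequality -/

lemma binom_entropy (a b : ℕ) :
    Nat.factorial (a+b) * (a^a * b^b) ≤ (Nat.factorial a * Nat.factorial b) * (a+b)^(a+b) := by
  have hchoose : (a+b).choose a * Nat.factorial a * Nat.factorial b = Nat.factorial (a+b) := by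
    have := Nat.choose_mul_factorial_mul_factorial (Nat.le_add_right a b)
    simpa using this
  have hterm : (a+b).choose a * (a^a * b^b) ≤ (a+b)^(a+b) := by
    rw [add_pow a b (a+b)]
    have hmem : a ∈ Finset.range (a+b+1) := Finset.mem_range.mpr (by omega)
    have := Finset.single_le_sum (f := fun k => a^k * b^(a+b-k) * (a+b).choose k)
      (fun i _ => Nat.zero_le _) hmem
    simpa [Nat.add_sub_cancel_left, mul_comm, mul_assoc, mul_left_comm] using this
  calc Nat.factorial (a+b) * (a^a * b^b)
      = (Nat.factorial a * Nat.factorial b) * ((a+b).choose a * (a^a * b^b)) := by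
        rw [← hchoose]; ring
    _ ≤ (Nat.factorial a * Nat.factorial b) * (a+b)^(a+b) :=
        Nat.mul_le_mul_left _ hterm

lemma pow_self_pos (m : ℕ) : 0 < m ^ m := by
  rcases Nat.eq_zero_or_pos m with h | h
  · simp [h]
  · exact pow_pos h m

lemma entropy_nat (k0 k1 k2 : ℕ) :
    Nat.factorial (k0+k1+k2) * (k0^k0 * k1^k1 * k2^k2) ≤
      (Nat.factorial k0 * Nat.factorial k1 * Nat.factorial k2) * (k0+k1+k2)^(k0+k1+k2) := by
  set m := k1 + k2 with hm
  have h1 := binom_entropy k0 m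
  have h2 := binom_entropy k1 k2
  have key : (Nat.factorial (k0+m) * (k0^k0 * k1^k1 * k2^k2)) * m^m ≤
      ((Nat.factorial k0 * Nat.factorial k1 * Nat.factorial k2) * (k0+m)^(k0+m)) * m^m := by
    calc (Nat.factorial (k0+m) * (k0^k0 * k1^k1 * k2^k2)) * m^m
        = (Nat.factorial (k0+m) * (k0^k0 * m^m)) * (k1^k1 * k2^k2) := by ring
      _ ≤ ((Nat.factorial k0 * Nat.factorial m) * (k0+m)^(k0+m)) * (k1^k1 * k2^k2) :=
          Nat.mul_le_mul_right _ h1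
      _ = (Nat.factorial k0 * (k0+m)^(k0+m)) * (Nat.factorial m * (k1^k1 * k2^k2)) := by ring
      _ ≤ (Nat.factorial k0 * (k0+m)^(k0+m)) * ((Nat.factorial k1 * Nat.factorial k2) * m^m) :=
          Nat.mul_le_mul_left _ (by rw [hm]; exact binom_entropy k1 k2 |>.trans_eq' (by ring) |>.trans_eq (by ring))
      _ = ((Nat.factorial k0 * Nat.factorial k1 * Nat.factorial k2) * (k0+m)^(k0+m)) * m^m := by
          ring
  have := Nat.le_of_mul_le_mul_right key (pow_self_pos m)
  simpa [hm, ← Nat.add_assoc] using this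

/-! ### Stirling bounds -/

open Stirling in
lemma fact_upper (n : ℕ) (hn : 1 ≤ n) :
    (Nat.factorial n : ℝ) * (Real.exp 1)^n ≤ 3 * Real.sqrt n * (n:ℝ)^n := by
  have hmono : stirlingSeq n ≤ Real.exp 1 / Real.sqrt 2 := by
    obtain ⟨m, rfl⟩ : ∃ m, n = m + 1 := ⟨n - 1, by omega⟩
    have := stirlingSeq'_antitone (Nat.zero_le m)
    simpa [stirlingSeq_one] using this
  have hd : (0:ℝ) < Real.sqrt (2*n) * ((n:ℝ) / Real.exp 1)^n := by
    have : (0:ℝ) < (n:ℝ) := by exact_mod_cast hn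
    positivity
  have hfact : (Nat.factorial n : ℝ) ≤ (Real.exp 1 / Real.sqrt 2) * (Real.sqrt (2*n) * ((n:ℝ)/Real.exp 1)^n) := by
    have := (div_le_iff₀ hd).mp hmono
    simpa [stirlingSeq] using this
  have hsqrt2 : Real.sqrt (2*(n:ℝ)) = Real.sqrt 2 * Real.sqrt n := Real.sqrt_mul (by norm_num) _
  have he : (0:ℝ) < Real.exp 1 := Real.exp_pos 1
  have h2 : (0:ℝ) < Real.sqrt 2 := by positivity
  have hee : Real.exp 1 ≤ 3 := by
    have := Real.exp_one_lt_d9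
    linarith
  have hpow : ((n:ℝ)/Real.exp 1)^n = (n:ℝ)^n / (Real.exp 1)^n := div_pow _ _ _
  have hpos : (0:ℝ) ≤ Real.sqrt n * (n:ℝ)^n := by positivity
  calc (Nat.factorial n : ℝ) * (Real.exp 1)^n
      ≤ ((Real.exp 1 / Real.sqrt 2) * (Real.sqrt (2*n) * ((n:ℝ)/Real.exp 1)^n)) * (Real.exp 1)^n := by
        apply mul_le_mul_of_nonneg_right hfact (by positivity)
    _ = Real.exp 1 * (Real.sqrt n * (n:ℝ)^n) := by
        rw [hsqrt2, hpow]
        field_simp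
    _ ≤ 3 * Real.sqrt n * (n:ℝ)^n := by
        rw [mul_assoc]
        exact mul_le_mul_of_nonneg_right hee hpos

open Stirling in
lemma fact_lower (n : ℕ) (hn : 1 ≤ n) :
    Real.sqrt n * (n:ℝ)^n ≤ (Nat.factorial n : ℝ) * (Real.exp 1)^n := by
  have hpi : Real.sqrt Real.pi ≤ stirlingSeq n := by
    obtain ⟨m, rfl⟩ : ∃ m, n = m + 1 := ⟨n - 1, by omega⟩
    have ht : Filter.Tendsto (stirlingSeq ∘ Nat.succ) Filter.atTop (nhds (Real.sqrt Real.pi)) := by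
      rw [Function.comp_def]
      exact (Filter.tendsto_add_atTop_iff_nat 1).mpr tendsto_stirlingSeq_sqrt_pi
    exact stirlingSeq'_antitone.le_of_tendsto ht m
  have h1pi : (1:ℝ) ≤ Real.sqrt Real.pi := by
    rw [show (1:ℝ) = Real.sqrt 1 by simp]
    exact Real.sqrt_le_sqrt (by linarith [Real.pi_gt_three])
  have hnp : (0:ℝ) < (n:ℝ) := by exact_mod_cast hn
  have hd : (0:ℝ) < Real.sqrt (2*n) * ((n:ℝ) / Real.exp 1)^n := by positivity
  have hfact : Real.sqrt (2*n) * ((n:ℝ)/Real.exp 1)^n ≤ (Nat.factorial n : ℝ) := by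
    have h := le_trans h1pi hpi
    rw [stirlingSeq, le_div_iff₀ hd] at h
    simpa using h
  have hs : Real.sqrt n ≤ Real.sqrt (2*(n:ℝ)) := Real.sqrt_le_sqrt (by linarith)
  have hpow : ((n:ℝ)/Real.exp 1)^n = (n:ℝ)^n / (Real.exp 1)^n := div_pow _ _ _
  have hE : (0:ℝ) < (Real.exp 1)^n := by positivity
  rw [← div_le_iff₀ hE]
  calc Real.sqrt n * (n:ℝ)^n / (Real.exp 1)^n
      = Real.sqrt n * ((n:ℝ)/Real.exp 1)^n := by rw [hpow]; ring
    _ ≤ Real.sqrt (2*(n:ℝ)) * ((n:ℝ)/Real.exp 1)^n := by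
        apply mul_le_mul_of_nonneg_right hs (by positivity)
    _ ≤ (Nat.factorial n : ℝ) := hfact

/-! ### pointwise x log x bounds -/

lemma xlogx_core (x : ℝ) (hx : 0 < x) :
    (x - 1) + (Real.sqrt x - 1)^2 ≤ x * Real.log x := by
  set s := Real.sqrt x with hs
  have hs0 : 0 < s := Real.sqrt_pos.mpr hx
  have hss : s * s = x := Real.mul_self_sqrt hx.le
  have hlog : Real.log x = 2 * Real.log s := by
    rw [hs, Real.log_sqrt hx.le]; ring
  have hlogs : s - 1 ≤ s * Real.log s := by
    have h := Real.log_le_sub_one_of_pos (show (0:ℝ) < s⁻¹ by positivity)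
    rw [Real.log_inv] at h
    -- -log s ≤ s⁻¹ - 1
    have : 1 - s⁻¹ ≤ Real.log s := by linarith
    have hmul := mul_le_mul_of_nonneg_left this hs0.le
    have : s * (1 - s⁻¹) = s - 1 := by field_simp
    linarith [hmul, this.symm.le]
  have : x * Real.log x = 2 * s * (s * Real.log s) := by
    rw [hlog, ← hss]; ring
  rw [this]
  nlinarith [hlogs, hs0, hss]

lemma xlogx_base (x : ℝ) (hx : 0 ≤ x) : x - 1 ≤ x * Real.log x := by
  rcases eq_or_lt_of_le hx with h | h
  · simp [← h]
  · have := xlogx_core x h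
    nlinarith [sq_nonneg (Real.sqrt x - 1)]

lemma xlogx_quad (x : ℝ) (hx : 0 ≤ x) (hx2 : x ≤ 3/2) :
    (x - 1) + (x-1)^2/5 ≤ x * Real.log x := by
  rcases eq_or_lt_of_le hx with h | h
  · rw [← h]; norm_num
  · have hcore := xlogx_core x h
    have hs0 : 0 ≤ Real.sqrt x := Real.sqrt_nonneg x
    have hss : Real.sqrt x * Real.sqrt x = x := Real.mul_self_sqrt hx
    have hquad : (x-1)^2/5 ≤ (Real.sqrt x - 1)^2 := by
      nlinarith [sq_nonneg (Real.sqrt x - 5/4), sq_nonneg (Real.sqrt x - 1), sq_nonneg (Real.sqrt x + 1)]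
    linarith

lemma xlogx_boost (x : ℝ) (hx : 0 ≤ x) (hx2 : x ≤ 1/2 ∨ 3/2 ≤ x) :
    (x - 1) + 1/20 ≤ x * Real.log x := by
  rcases eq_or_lt_of_le hx with h | h
  · rw [← h]; norm_num
  · have hcore := xlogx_core x h
    have hs0 : 0 ≤ Real.sqrt x := Real.sqrt_nonneg x
    have hss : Real.sqrt x * Real.sqrt x = x := Real.mul_self_sqrt hx
    have hb : 1/20 ≤ (Real.sqrt x - 1)^2 := by
      rcases hx2 with h1 | h1
      · nlinarith [sq_nonneg (Real.sqrt x - 71/100)]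
      · have hsge : 153/125 ≤ Real.sqrt x := by nlinarith
        nlinarith
    linarith

/-! ### per-term bounds for `L = Σ k_i log(3 k_i / n)` -/

lemma term_base (n k : ℕ) (hn : (0:ℝ) < n) :
    ((n:ℝ)/3) * (3*(k:ℝ)/n - 1) ≤ (k:ℝ) * Real.log (3*(k:ℝ)/n) := by
  have hx : (0:ℝ) ≤ 3*(k:ℝ)/n := by positivity
  have h := xlogx_base _ hx
  have h2 := mul_le_mul_of_nonneg_left h (show (0:ℝ) ≤ (n:ℝ)/3 by positivity)
  calc ((n:ℝ)/3) * (3*(k:ℝ)/n - 1) ≤ ((n:ℝ)/3) * (3*(k:ℝ)/n * Real.log (3*(k:ℝ)/n)) := h2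
    _ = (k:ℝ) * Real.log (3*(k:ℝ)/n) := by field_simp

lemma term_quad (n k : ℕ) (hn : (0:ℝ) < n) (h2 : 2*k ≤ n) :
    ((n:ℝ)/3) * (3*(k:ℝ)/n - 1) + (3*(k:ℝ)-n)^2/(15*n) ≤ (k:ℝ) * Real.log (3*(k:ℝ)/n) := by
  have hx : (0:ℝ) ≤ 3*(k:ℝ)/n := by positivity
  have hkn : (2:ℝ)*(k:ℝ) ≤ n := by exact_mod_cast h2
  have hx2 : 3*(k:ℝ)/n ≤ 3/2 := by rw [div_le_iff₀ hn]; linarith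
  have h := xlogx_quad _ hx hx2
  have h2' := mul_le_mul_of_nonneg_left h (show (0:ℝ) ≤ (n:ℝ)/3 by positivity)
  have e1 : ((n:ℝ)/3) * ((3*(k:ℝ)/n - 1) + (3*(k:ℝ)/n-1)^2/5)
      = ((n:ℝ)/3) * (3*(k:ℝ)/n - 1) + (3*(k:ℝ)-n)^2/(15*n) := by
    field_simp
    ring
  have e2 : ((n:ℝ)/3) * (3*(k:ℝ)/n * Real.log (3*(k:ℝ)/n))
      = (k:ℝ) * Real.log (3*(k:ℝ)/n) := by field_simp
  linarith [e1 ▸ (e2 ▸ h2')]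

lemma term_boost (n k : ℕ) (hn : (0:ℝ) < n) (h : 6*k < n ∨ n < 2*k) :
    ((n:ℝ)/3) * (3*(k:ℝ)/n - 1) + (n:ℝ)/60 ≤ (k:ℝ) * Real.log (3*(k:ℝ)/n) := by
  have hx : (0:ℝ) ≤ 3*(k:ℝ)/n := by positivity
  have hx2 : 3*(k:ℝ)/n ≤ 1/2 ∨ 3/2 ≤ 3*(k:ℝ)/n := by
    rcases h with h | h
    · left
      have : (6:ℝ)*(k:ℝ) ≤ n := by exact_mod_cast h.le
      rw [div_le_iff₀ hn]; linarith
    · right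
      have : (2:ℝ)*(k:ℝ) ≥ n := by exact_mod_cast h.le
      rw [le_div_iff₀ hn]; linarith
  have h := xlogx_boost _ hx hx2
  have h2' := mul_le_mul_of_nonneg_left h (show (0:ℝ) ≤ (n:ℝ)/3 by positivity)
  have e1 : ((n:ℝ)/3) * ((3*(k:ℝ)/n - 1) + 1/20)
      = ((n:ℝ)/3) * (3*(k:ℝ)/n - 1) + (n:ℝ)/60 := by ring
  have e2 : ((n:ℝ)/3) * (3*(k:ℝ)/n * Real.log (3*(k:ℝ)/n))
      = (k:ℝ) * Real.log (3*(k:ℝ)/n) := by field_simp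
  linarith [e1 ▸ (e2 ▸ h2')]

lemma logx_split (n k : ℕ) (hn : (0:ℝ) < n) :
    (k:ℝ) * Real.log (3*(k:ℝ)/n)
      = k*(Real.log 3) + k*Real.log k - k*Real.log n := by
  rcases Nat.eq_zero_or_pos k with h | h
  · simp [h]
  · have hk : (0:ℝ) < k := by exact_mod_cast h
    rw [Real.log_div (by positivity) (ne_of_gt hn), Real.log_mul (by norm_num) (ne_of_gt hk)]
    ring

lemma exp_neg_le_inv {x : ℝ} (hx : 0 < x) : Real.exp (-x) ≤ x⁻¹ := by
  rw [Real.exp_neg]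
  apply inv_anti₀ hx
  linarith [Real.add_one_le_exp x]

set_option maxHeartbeats 1000000 in
lemma pn_bound (k0 k1 k2 n : ℕ) (hn : n = k0 + k1 + k2) (hn1 : 1 ≤ n) (S : ℝ)
    (hS : S = (3*(k0:ℝ) - n)^2 + (3*(k1:ℝ) - n)^2 + (3*(k2:ℝ) - n)^2) (hSpos : 0 < S) :
    (3:ℝ)^(-(n:ℤ)) * ((Nat.factorial n : ℝ) /
        ((Nat.factorial k0 : ℝ) * (Nat.factorial k1 : ℝ) * (Nat.factorial k2 : ℝ))) ≤
      675 / S + Real.exp (-(n:ℝ)/60) := by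
  have hnR : (0:ℝ) < n := by exact_mod_cast hn1
  have hncast : (k0:ℝ) + k1 + k2 = n := by exact_mod_cast congrArg (Nat.cast (R := ℝ)) hn.symm
  set L : ℝ := k0 * Real.log (3*(k0:ℝ)/n) + k1 * Real.log (3*(k1:ℝ)/n)
      + k2 * Real.log (3*(k2:ℝ)/n) with hLdef
  have hfp : (0:ℝ) < (Nat.factorial k0 : ℝ) * (Nat.factorial k1 : ℝ) * (Nat.factorial k2 : ℝ) := by
    positivity
  have hkk : ∀ k : ℕ, (0:ℝ) < (k:ℝ)^k := fun k => by exact_mod_cast pow_self_pos k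
  have hppos : (0:ℝ) < (k0:ℝ)^k0 * (k1:ℝ)^k1 * (k2:ℝ)^k2 :=
    mul_pos (mul_pos (hkk k0) (hkk k1)) (hkk k2)
  have hRHSpos : (0:ℝ) < (3:ℝ)^n * ((k0:ℝ)^k0 * (k1:ℝ)^k1 * (k2:ℝ)^k2) / (n:ℝ)^n := by
    positivity
  have hexpL : Real.exp L = (3:ℝ)^n * ((k0:ℝ)^k0 * (k1:ℝ)^k1 * (k2:ℝ)^k2) / (n:ℝ)^n := by
    rw [← Real.exp_log hRHSpos]
    congr 1
    rw [Real.log_div (by positivity) (by positivity),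
      Real.log_mul (by positivity) (ne_of_gt hppos),
      Real.log_mul (ne_of_gt (mul_pos (hkk k0) (hkk k1))) (ne_of_gt (hkk k2)),
      Real.log_mul (ne_of_gt (hkk k0)) (ne_of_gt (hkk k1)),
      Real.log_pow, Real.log_pow, Real.log_pow, Real.log_pow, Real.log_pow]
    rw [hLdef, logx_split n k0 hnR, logx_split n k1 hnR, logx_split n k2 hnR]
    push_cast
    linear_combination (Real.log 3 - Real.log (n:ℝ)) * hncast
  have hzpow : (3:ℝ)^(-(n:ℤ)) = ((3:ℝ)^n)⁻¹ := by
    rw [zpow_neg, zpow_natCast]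
  have hid : (3:ℝ)^(-(n:ℤ)) * ((n:ℝ)^n / ((k0:ℝ)^k0 * (k1:ℝ)^k1 * (k2:ℝ)^k2))
      = Real.exp (-L) := by
    rw [Real.exp_neg, hexpL, hzpow, inv_div]
    rw [eq_div_iff (by positivity)]
    field_simp
  have hent : (Nat.factorial n : ℝ) * ((k0:ℝ)^k0 * (k1:ℝ)^k1 * (k2:ℝ)^k2)
      ≤ ((Nat.factorial k0 : ℝ) * (Nat.factorial k1 : ℝ) * (Nat.factorial k2 : ℝ)) * (n:ℝ)^n := by
    have h := entropy_nat k0 k1 k2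
    rw [← hn] at h
    exact_mod_cast h
  have hxe : ∀ k : ℕ, ((n:ℝ)/3)*(3*(k:ℝ)/n-1) = (k:ℝ) - (n:ℝ)/3 := by
    intro k; field_simp
  have hsum0 : ((n:ℝ)/3)*(3*(k0:ℝ)/n-1) + ((n:ℝ)/3)*(3*(k1:ℝ)/n-1)
      + ((n:ℝ)/3)*(3*(k2:ℝ)/n-1) = 0 := by
    rw [hxe k0, hxe k1, hxe k2]; linarith
  by_cases hcen : n ≤ 6*k0 ∧ n ≤ 6*k1 ∧ n ≤ 6*k2 ∧ 2*k0 ≤ n ∧ 2*k1 ≤ n ∧ 2*k2 ≤ n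
  · obtain ⟨h60, h61, h62, h20, h21, h22⟩ := hcen
    have t0 := term_quad n k0 hnR h20
    have t1 := term_quad n k1 hnR h21
    have t2 := term_quad n k2 hnR h22
    have hLge : S/(15*n) ≤ L := by
      have hSsplit : S/(15*(n:ℝ)) = (3*(k0:ℝ)-n)^2/(15*n) + (3*(k1:ℝ)-n)^2/(15*n)
          + (3*(k2:ℝ)-n)^2/(15*n) := by rw [hS]; ring
      rw [hLdef, hSsplit]; linarith
    have hk01 : 1 ≤ k0 := by omega
    have hk11 : 1 ≤ k1 := by omega
    have hk21 : 1 ≤ k2 := by omega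
    have u := fact_upper n hn1
    have l0 := fact_lower k0 hk01
    have l1 := fact_lower k1 hk11
    have l2 := fact_lower k2 hk21
    have hpre : 3*(n:ℝ)*Real.sqrt n ≤ 45 * Real.sqrt ((k0:ℝ)*(k1:ℝ)*(k2:ℝ)) := by
      have c0 : (n:ℝ) ≤ 6*(k0:ℝ) := by exact_mod_cast h60
      have c1 : (n:ℝ) ≤ 6*(k1:ℝ) := by exact_mod_cast h61
      have c2 : (n:ℝ) ≤ 6*(k2:ℝ) := by exact_mod_cast h62
      have hc : 9*(n:ℝ)^3 ≤ 2025*((k0:ℝ)*(k1:ℝ)*(k2:ℝ)) := by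
        have p1 : (n:ℝ)*(n:ℝ) ≤ (6*(k0:ℝ))*(6*(k1:ℝ)) :=
          mul_le_mul c0 c1 hnR.le (by positivity)
        have p2 : ((n:ℝ)*(n:ℝ))*(n:ℝ) ≤ ((6*(k0:ℝ))*(6*(k1:ℝ)))*(6*(k2:ℝ)) :=
          mul_le_mul p1 c2 hnR.le (by positivity)
        nlinarith [p2]
      have hsn : Real.sqrt (n:ℝ) ^ 2 = (n:ℝ) := Real.sq_sqrt hnR.le
      have hsk : Real.sqrt ((k0:ℝ)*(k1:ℝ)*(k2:ℝ)) ^ 2 = (k0:ℝ)*(k1:ℝ)*(k2:ℝ) :=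
        Real.sq_sqrt (by positivity)
      have h1 : (3*(n:ℝ)*Real.sqrt n)^2 ≤ (45*Real.sqrt ((k0:ℝ)*(k1:ℝ)*(k2:ℝ)))^2 := by
        nlinarith [hc, hsn, hsk]
      have ha : (0:ℝ) ≤ 3*(n:ℝ)*Real.sqrt n := by positivity
      have hb : (0:ℝ) ≤ 45*Real.sqrt ((k0:ℝ)*(k1:ℝ)*(k2:ℝ)) := by positivity
      calc 3*(n:ℝ)*Real.sqrt n = Real.sqrt ((3*(n:ℝ)*Real.sqrt n)^2) := (Real.sqrt_sq ha).symm
        _ ≤ Real.sqrt ((45*Real.sqrt ((k0:ℝ)*(k1:ℝ)*(k2:ℝ)))^2) := Real.sqrt_le_sqrt h1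
        _ = 45*Real.sqrt ((k0:ℝ)*(k1:ℝ)*(k2:ℝ)) := Real.sqrt_sq hb
    have hsqk : Real.sqrt ((k0:ℝ)*(k1:ℝ)*(k2:ℝ))
        = Real.sqrt k0 * Real.sqrt k1 * Real.sqrt k2 := by
      rw [Real.sqrt_mul (by positivity), Real.sqrt_mul (by positivity)]
    have hEsplit : (Real.exp 1:ℝ)^n = (Real.exp 1)^k0 * ((Real.exp 1)^k1 * (Real.exp 1)^k2) := by
      rw [← pow_add, ← pow_add, hn, Nat.add_assoc]
    have lprod : (Real.sqrt k0 * Real.sqrt k1 * Real.sqrt k2)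
          * ((k0:ℝ)^k0 * (k1:ℝ)^k1 * (k2:ℝ)^k2)
        ≤ ((Nat.factorial k0:ℝ) * (Nat.factorial k1:ℝ) * (Nat.factorial k2:ℝ))
          * (Real.exp 1)^n := by
      have m01 : (Real.sqrt k0 * (k0:ℝ)^k0) * (Real.sqrt k1 * (k1:ℝ)^k1)
          ≤ ((Nat.factorial k0:ℝ) * (Real.exp 1)^k0) * ((Nat.factorial k1:ℝ) * (Real.exp 1)^k1) :=
        mul_le_mul l0 l1 (by positivity) (by positivity)
      have m012 : ((Real.sqrt k0 * (k0:ℝ)^k0) * (Real.sqrt k1 * (k1:ℝ)^k1))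
            * (Real.sqrt k2 * (k2:ℝ)^k2)
          ≤ (((Nat.factorial k0:ℝ) * (Real.exp 1)^k0) * ((Nat.factorial k1:ℝ) * (Real.exp 1)^k1))
            * ((Nat.factorial k2:ℝ) * (Real.exp 1)^k2) :=
        mul_le_mul m01 l2 (by positivity) (by positivity)
      calc (Real.sqrt k0 * Real.sqrt k1 * Real.sqrt k2)
            * ((k0:ℝ)^k0 * (k1:ℝ)^k1 * (k2:ℝ)^k2)
          = ((Real.sqrt k0 * (k0:ℝ)^k0) * (Real.sqrt k1 * (k1:ℝ)^k1))
            * (Real.sqrt k2 * (k2:ℝ)^k2) := by ring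
        _ ≤ (((Nat.factorial k0:ℝ) * (Real.exp 1)^k0) * ((Nat.factorial k1:ℝ) * (Real.exp 1)^k1))
            * ((Nat.factorial k2:ℝ) * (Real.exp 1)^k2) := m012
        _ = ((Nat.factorial k0:ℝ) * (Nat.factorial k1:ℝ) * (Nat.factorial k2:ℝ))
            * (Real.exp 1)^n := by rw [hEsplit]; ring
    have hStir : (n:ℝ) * (Nat.factorial n : ℝ) * ((k0:ℝ)^k0 * (k1:ℝ)^k1 * (k2:ℝ)^k2)
        ≤ 45 * ((Nat.factorial k0:ℝ) * (Nat.factorial k1:ℝ) * (Nat.factorial k2:ℝ))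
          * (n:ℝ)^n := by
      have hposmul : (0:ℝ) < (Real.exp 1)^n * Real.sqrt ((k0:ℝ)*(k1:ℝ)*(k2:ℝ)) := by positivity
      apply le_of_mul_le_mul_right _ hposmul
      calc ((n:ℝ) * (Nat.factorial n : ℝ) * ((k0:ℝ)^k0 * (k1:ℝ)^k1 * (k2:ℝ)^k2))
            * ((Real.exp 1)^n * Real.sqrt ((k0:ℝ)*(k1:ℝ)*(k2:ℝ)))
          = ((Nat.factorial n : ℝ) * (Real.exp 1)^n)
            * (((n:ℝ) * Real.sqrt ((k0:ℝ)*(k1:ℝ)*(k2:ℝ)))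
              * ((k0:ℝ)^k0 * (k1:ℝ)^k1 * (k2:ℝ)^k2)) := by ring
        _ ≤ (3 * Real.sqrt n * (n:ℝ)^n)
            * (((n:ℝ) * Real.sqrt ((k0:ℝ)*(k1:ℝ)*(k2:ℝ)))
              * ((k0:ℝ)^k0 * (k1:ℝ)^k1 * (k2:ℝ)^k2)) :=
            mul_le_mul_of_nonneg_right u (by positivity)
        _ = (3*(n:ℝ)*Real.sqrt n)
            * (Real.sqrt ((k0:ℝ)*(k1:ℝ)*(k2:ℝ)) * ((k0:ℝ)^k0 * (k1:ℝ)^k1 * (k2:ℝ)^k2))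
            * (n:ℝ)^n := by ring
        _ ≤ (45 * Real.sqrt ((k0:ℝ)*(k1:ℝ)*(k2:ℝ)))
            * (Real.sqrt ((k0:ℝ)*(k1:ℝ)*(k2:ℝ)) * ((k0:ℝ)^k0 * (k1:ℝ)^k1 * (k2:ℝ)^k2))
            * (n:ℝ)^n := by
            apply mul_le_mul_of_nonneg_right _ (by positivity)
            exact mul_le_mul_of_nonneg_right hpre (by positivity)
        _ ≤ (45 * Real.sqrt ((k0:ℝ)*(k1:ℝ)*(k2:ℝ)))
            * (((Nat.factorial k0:ℝ) * (Nat.factorial k1:ℝ) * (Nat.factorial k2:ℝ))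
              * (Real.exp 1)^n)
            * (n:ℝ)^n := by
            apply mul_le_mul_of_nonneg_right _ (by positivity)
            apply mul_le_mul_of_nonneg_left _ (by positivity)
            rw [← hsqk] at lprod
            exact lprod
        _ = (45 * ((Nat.factorial k0:ℝ) * (Nat.factorial k1:ℝ) * (Nat.factorial k2:ℝ))
              * (n:ℝ)^n)
            * ((Real.exp 1)^n * Real.sqrt ((k0:ℝ)*(k1:ℝ)*(k2:ℝ))) := by ring
    have c1 : (Nat.factorial n : ℝ)
          / ((Nat.factorial k0:ℝ) * (Nat.factorial k1:ℝ) * (Nat.factorial k2:ℝ))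
        ≤ (45/(n:ℝ)) * ((n:ℝ)^n / ((k0:ℝ)^k0 * (k1:ℝ)^k1 * (k2:ℝ)^k2)) := by
      have heq : (45/(n:ℝ)) * ((n:ℝ)^n / ((k0:ℝ)^k0 * (k1:ℝ)^k1 * (k2:ℝ)^k2))
          = (45*(n:ℝ)^n) / ((n:ℝ) * ((k0:ℝ)^k0 * (k1:ℝ)^k1 * (k2:ℝ)^k2)) := by
        field_simp
      rw [heq, div_le_div_iff₀ hfp (by positivity)]
      calc (Nat.factorial n : ℝ) * ((n:ℝ) * ((k0:ℝ)^k0 * (k1:ℝ)^k1 * (k2:ℝ)^k2))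
          = (n:ℝ) * (Nat.factorial n : ℝ) * ((k0:ℝ)^k0 * (k1:ℝ)^k1 * (k2:ℝ)^k2) := by ring
        _ ≤ 45 * ((Nat.factorial k0:ℝ) * (Nat.factorial k1:ℝ) * (Nat.factorial k2:ℝ))
            * (n:ℝ)^n := hStir
        _ = 45*(n:ℝ)^n * ((Nat.factorial k0:ℝ) * (Nat.factorial k1:ℝ) * (Nat.factorial k2:ℝ)) := by
            ring
    have c2 : Real.exp (-L) ≤ 15*(n:ℝ)/S := by
      have h1 : Real.exp (-L) ≤ Real.exp (-(S/(15*(n:ℝ)))) :=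
        Real.exp_le_exp.mpr (by linarith)
      have h2 : Real.exp (-(S/(15*(n:ℝ)))) ≤ (S/(15*(n:ℝ)))⁻¹ := exp_neg_le_inv (by positivity)
      rw [inv_div] at h2
      linarith
    have h30 : (0:ℝ) < (3:ℝ)^(-(n:ℤ)) := by positivity
    have final : (3:ℝ)^(-(n:ℤ)) * ((Nat.factorial n : ℝ)
          / ((Nat.factorial k0:ℝ) * (Nat.factorial k1:ℝ) * (Nat.factorial k2:ℝ)))
        ≤ 675/S := by
      calc (3:ℝ)^(-(n:ℤ)) * ((Nat.factorial n : ℝ)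
            / ((Nat.factorial k0:ℝ) * (Nat.factorial k1:ℝ) * (Nat.factorial k2:ℝ)))
          ≤ (3:ℝ)^(-(n:ℤ)) * ((45/(n:ℝ)) * ((n:ℝ)^n / ((k0:ℝ)^k0 * (k1:ℝ)^k1 * (k2:ℝ)^k2))) :=
            mul_le_mul_of_nonneg_left c1 h30.le
        _ = (45/(n:ℝ)) * ((3:ℝ)^(-(n:ℤ)) * ((n:ℝ)^n / ((k0:ℝ)^k0 * (k1:ℝ)^k1 * (k2:ℝ)^k2))) := by
            ring
        _ = (45/(n:ℝ)) * Real.exp (-L) := by rw [hid]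
        _ ≤ (45/(n:ℝ)) * (15*(n:ℝ)/S) := mul_le_mul_of_nonneg_left c2 (by positivity)
        _ = 675/S := by field_simp; ring
    linarith [Real.exp_pos (-(n:ℝ)/60)]
  · have hdisj : 6*k0 < n ∨ 6*k1 < n ∨ 6*k2 < n ∨ n < 2*k0 ∨ n < 2*k1 ∨ n < 2*k2 := by
      omega
    have b0 := term_base n k0 hnR
    have b1 := term_base n k1 hnR
    have b2 := term_base n k2 hnR
    have hLge : (n:ℝ)/60 ≤ L := by
      rw [hLdef]
      rcases hdisj with h|h|h|h|h|h
      · have := term_boost n k0 hnR (Or.inl h); linarith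
      · have := term_boost n k1 hnR (Or.inl h); linarith
      · have := term_boost n k2 hnR (Or.inl h); linarith
      · have := term_boost n k0 hnR (Or.inr h); linarith
      · have := term_boost n k1 hnR (Or.inr h); linarith
      · have := term_boost n k2 hnR (Or.inr h); linarith
    have c1 : (Nat.factorial n : ℝ)
          / ((Nat.factorial k0:ℝ) * (Nat.factorial k1:ℝ) * (Nat.factorial k2:ℝ))
        ≤ (n:ℝ)^n / ((k0:ℝ)^k0 * (k1:ℝ)^k1 * (k2:ℝ)^k2) := by
      rw [div_le_div_iff₀ hfp hppos]
      calc (Nat.factorial n : ℝ) * ((k0:ℝ)^k0 * (k1:ℝ)^k1 * (k2:ℝ)^k2)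
          ≤ ((Nat.factorial k0:ℝ) * (Nat.factorial k1:ℝ) * (Nat.factorial k2:ℝ)) * (n:ℝ)^n :=
            hent
        _ = (n:ℝ)^n * ((Nat.factorial k0:ℝ) * (Nat.factorial k1:ℝ) * (Nat.factorial k2:ℝ)) := by
            ring
    have h30 : (0:ℝ) < (3:ℝ)^(-(n:ℤ)) := by positivity
    have base : (3:ℝ)^(-(n:ℤ)) * ((Nat.factorial n : ℝ)
          / ((Nat.factorial k0:ℝ) * (Nat.factorial k1:ℝ) * (Nat.factorial k2:ℝ)))
        ≤ Real.exp (-L) := by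
      calc (3:ℝ)^(-(n:ℤ)) * ((Nat.factorial n : ℝ)
            / ((Nat.factorial k0:ℝ) * (Nat.factorial k1:ℝ) * (Nat.factorial k2:ℝ)))
          ≤ (3:ℝ)^(-(n:ℤ)) * ((n:ℝ)^n / ((k0:ℝ)^k0 * (k1:ℝ)^k1 * (k2:ℝ)^k2)) :=
            mul_le_mul_of_nonneg_left c1 h30.le
        _ = Real.exp (-L) := hid
    have hmon : Real.exp (-L) ≤ Real.exp (-(n:ℝ)/60) := by
      apply Real.exp_le_exp.mpr
      have : -(L) ≤ -((n:ℝ)/60) := by linarith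
      linarith [this]
    have : (0:ℝ) < 675/S := by positivity
    linarith


lemma triWalkProb_le_one (n : ℕ) (y : ℂ) : triWalkProb n y ≤ 1 := by
  classical
  unfold triWalkProb
  have hcard : Nat.card { s : Fin n → Fin 3 // ∑ i, triTau ^ ((s i : ℕ)) = y } ≤ 3^n := by
    rw [Nat.card_eq_fintype_card]
    calc Fintype.card { s : Fin n → Fin 3 // ∑ i, triTau ^ ((s i : ℕ)) = y }
        ≤ Fintype.card (Fin n → Fin 3) := Fintype.card_subtype_le _
      _ = 3^n := by rw [Fintype.card_fun, Fintype.card_fin, Fintype.card_fin]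
  have hzpow : (3:ℝ)^(-(n:ℤ)) = ((3:ℝ)^n)⁻¹ := by rw [zpow_neg, zpow_natCast]
  have hcR : (Nat.card { s : Fin n → Fin 3 // ∑ i, triTau ^ ((s i : ℕ)) = y } : ℝ)
      ≤ (3:ℝ)^n := by exact_mod_cast hcard
  rw [hzpow]
  have h3 : (0:ℝ) < (3:ℝ)^n := by positivity
  calc ((3:ℝ)^n)⁻¹ * (Nat.card { s : Fin n → Fin 3 // ∑ i, triTau ^ ((s i : ℕ)) = y } : ℝ)
      ≤ ((3:ℝ)^n)⁻¹ * (3:ℝ)^n := mul_le_mul_of_nonneg_left hcR (by positivity)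
    _ = 1 := inv_mul_cancel₀ (ne_of_gt h3)

set_option maxHeartbeats 1000000 in
/-- **Uniform short-time Green function bound on the directed triangular lattice**
(the bound on the term I in the proof of Proposition 3.12): there is a constant `C`
such that for every lattice point `y = a + bτ`,
`Σ_{n=0}^{⌊|y|²⌋} p_n(y) ≤ C`. -/
theorem triangular_short_time_green_bound :
    ∃ C > 0, ∀ a b : ℤ,
      ∑ n ∈ Finset.range (⌊‖(a : ℂ) + (b : ℂ) * triTau‖ ^ 2⌋₊ + 1),
        triWalkProb n ((a : ℂ) + (b : ℂ) * triTau) ≤ C := by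
  classical
  refine ⟨300, by norm_num, fun a b => ?_⟩
  set y : ℂ := (a:ℂ) + (b:ℂ) * triTau with hy
  set Q : ℤ := a^2 - a*b + b^2 with hQ
  have hQ0 : 0 ≤ Q := by nlinarith [sq_nonneg (a-b), sq_nonneg a, sq_nonneg b]
  have habs : ‖y‖ ^ 2 = (Q : ℝ) := by
    rw [Complex.sq_norm, Complex.normSq_apply]
    have hre : y.re = (a:ℝ) + (b:ℝ) * (-(1/2)) := by
      simp [hy, Complex.add_re, Complex.mul_re, triTau_re, triTau_im]
    have him : y.im = (b:ℝ) * (Real.sqrt 3 / 2) := by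
      simp [hy, Complex.add_im, Complex.mul_im, triTau_re, triTau_im]
    rw [hre, him, hQ]
    have h3 : Real.sqrt 3 * Real.sqrt 3 = 3 := Real.mul_self_sqrt (by norm_num)
    push_cast
    linear_combination ((b:ℝ)^2/4) * h3
  have hfloor : ⌊‖y‖ ^ 2⌋₊ = Q.toNat := by
    have hQQ : ((Q:ℤ):ℝ) = ((Q.toNat : ℕ) : ℝ) := by
      exact_mod_cast (Int.toNat_of_nonneg hQ0).symm
    rw [habs, hQQ]
    exact Nat.floor_natCast _
  rw [hfloor]
  by_cases hQz : Q = 0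
  · rw [show Q.toNat = 0 by simp [hQz]]
    rw [Finset.sum_range_one]
    calc triWalkProb 0 y ≤ 1 := triWalkProb_le_one 0 y
      _ ≤ 300 := by norm_num
  · have hQ1 : 1 ≤ Q := by omega
    have hQR : (1:ℝ) ≤ (Q:ℝ) := by exact_mod_cast hQ1
    have hQRpos : (0:ℝ) < (Q:ℝ) := by linarith
    -- per-term bound for positive times
    have hterm : ∀ m : ℕ, triWalkProb (m+1) y ≤ 112.5/(Q:ℝ) + Real.exp (-((m:ℝ)+1)/60) := by
      intro m
      set n := m + 1 with hn'
      unfold triWalkProb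
      by_cases hA : Nonempty {s : Fin n → Fin 3 // ∑ i, triTau ^ ((s i : ℕ)) = y}
      · obtain ⟨s₀, hs₀⟩ := hA
        obtain ⟨ha, hb⟩ := fc_relations s₀ hs₀
        have hsum : fc s₀ 0 + fc s₀ 1 + fc s₀ 2 = n := by
          have := fc_sum s₀
          rw [Fin.sum_univ_three] at this
          exact this
        -- all elements of A have the same counts
        have hsub : ∀ s : {s : Fin n → Fin 3 // ∑ i, triTau ^ ((s i : ℕ)) = y},
            ∀ j, fc s.1 j = fc s₀ j := by
          intro s j
          obtain ⟨ha', hb'⟩ := fc_relations s.1 s.2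
          have hsum' : fc s.1 0 + fc s.1 1 + fc s.1 2 = n := by
            have := fc_sum s.1
            rw [Fin.sum_univ_three] at this
            exact this
          have e0 : fc s.1 0 = fc s₀ 0 := by omega
          have e1 : fc s.1 1 = fc s₀ 1 := by omega
          have e2 : fc s.1 2 = fc s₀ 2 := by omega
          fin_cases j
          · exact e0
          · exact e1
          · exact e2
        have hmono : Nat.card {s : Fin n → Fin 3 // ∑ i, triTau ^ ((s i : ℕ)) = y}
            ≤ Nat.card {s : Fin n → Fin 3 // ∀ j, fc s j = fc s₀ j} := by
          apply Nat.card_le_card_of_injective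
            (fun s => (⟨s.1, hsub s⟩ : {s : Fin n → Fin 3 // ∀ j, fc s j = fc s₀ j}))
          intro s t hst
          cases s; cases t
          simpa using hst
        have hcard := card_mul_le s₀
        rw [Fin.prod_univ_three] at hcard
        have hcardA : Nat.card {s : Fin n → Fin 3 // ∑ i, triTau ^ ((s i : ℕ)) = y}
              * (Nat.factorial (fc s₀ 0) * Nat.factorial (fc s₀ 1) * Nat.factorial (fc s₀ 2))
            ≤ Nat.factorial n :=
          le_trans (Nat.mul_le_mul_right _ hmono) hcard
        have hfp : (0:ℝ) < (Nat.factorial (fc s₀ 0) : ℝ) * (Nat.factorial (fc s₀ 1) : ℝ)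
            * (Nat.factorial (fc s₀ 2) : ℝ) := by positivity
        have hcardR : (Nat.card {s : Fin n → Fin 3 // ∑ i, triTau ^ ((s i : ℕ)) = y} : ℝ)
            ≤ (Nat.factorial n : ℝ) / ((Nat.factorial (fc s₀ 0) : ℝ)
              * (Nat.factorial (fc s₀ 1) : ℝ) * (Nat.factorial (fc s₀ 2) : ℝ)) := by
          rw [le_div_iff₀ hfp]
          exact_mod_cast hcardA
        -- S = 6Q
        have haR : (fc s₀ 0 : ℝ) - (fc s₀ 2 : ℝ) = (a:ℝ) := by exact_mod_cast ha
        have hbR : (fc s₀ 1 : ℝ) - (fc s₀ 2 : ℝ) = (b:ℝ) := by exact_mod_cast hb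
        have hsumR : (fc s₀ 0 : ℝ) + (fc s₀ 1 : ℝ) + (fc s₀ 2 : ℝ) = (n:ℝ) := by
          exact_mod_cast hsum
        have e0 : 3*(fc s₀ 0 : ℝ) - (n:ℝ) = 2*(a:ℝ) - (b:ℝ) := by linarith
        have e1 : 3*(fc s₀ 1 : ℝ) - (n:ℝ) = 2*(b:ℝ) - (a:ℝ) := by linarith
        have e2 : 3*(fc s₀ 2 : ℝ) - (n:ℝ) = -(a:ℝ) - (b:ℝ) := by linarith
        have hQc : ((Q:ℤ):ℝ) = (a:ℝ)^2 - (a:ℝ)*(b:ℝ) + (b:ℝ)^2 := by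
          rw [hQ]; push_cast; ring
        have hS : 6*(Q:ℝ) = (3*(fc s₀ 0 : ℝ) - (n:ℝ))^2 + (3*(fc s₀ 1 : ℝ) - (n:ℝ))^2
            + (3*(fc s₀ 2 : ℝ) - (n:ℝ))^2 := by
          rw [hQc, e0, e1, e2]; ring
        have hSpos : (0:ℝ) < 6*(Q:ℝ) := by linarith
        have hn1 : 1 ≤ n := Nat.succ_le_succ (Nat.zero_le m)
        have hpn := pn_bound (fc s₀ 0) (fc s₀ 1) (fc s₀ 2) n hsum.symm hn1
          (6*(Q:ℝ)) hS hSpos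
        have hchain : (3:ℝ)^(-(n:ℤ))
              * (Nat.card {s : Fin n → Fin 3 // ∑ i, triTau ^ ((s i : ℕ)) = y} : ℝ)
            ≤ 675/(6*(Q:ℝ)) + Real.exp (-(n:ℝ)/60) := by
          calc (3:ℝ)^(-(n:ℤ))
                * (Nat.card {s : Fin n → Fin 3 // ∑ i, triTau ^ ((s i : ℕ)) = y} : ℝ)
              ≤ (3:ℝ)^(-(n:ℤ)) * ((Nat.factorial n : ℝ) / ((Nat.factorial (fc s₀ 0) : ℝ)
                  * (Nat.factorial (fc s₀ 1) : ℝ) * (Nat.factorial (fc s₀ 2) : ℝ))) :=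
                mul_le_mul_of_nonneg_left hcardR (by positivity)
            _ ≤ 675/(6*(Q:ℝ)) + Real.exp (-(n:ℝ)/60) := hpn
        have he : 675/(6*(Q:ℝ)) = 112.5/(Q:ℝ) := by
          rw [div_eq_div_iff (by linarith) (by linarith)]
          ring
        have hncast : ((n:ℕ):ℝ) = (m:ℝ)+1 := by push_cast [hn']; ring
        rw [he, hncast] at hchain
        exact hchain
      · haveI := not_nonempty_iff.mp hA
        rw [Nat.card_of_isEmpty]
        push_cast
        rw [mul_zero]
        positivity
    -- sum the bounds
    set N := Q.toNat with hN
    have hNR : ((N:ℕ):ℝ) = (Q:ℝ) := by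
      rw [hN]
      exact_mod_cast Int.toNat_of_nonneg hQ0
    rw [Finset.sum_range_succ']
    set r : ℝ := Real.exp (-(1:ℝ)/60) with hr
    have hr0 : 0 ≤ r := (Real.exp_pos _).le
    have hr1 : r ≤ 119/120 := by
      have h1 : (1:ℝ) + 1/60 ≤ Real.exp (1/60) := by
        linarith [Real.add_one_le_exp (1/60 : ℝ)]
      have h2 : Real.exp (-(1:ℝ)/60) = (Real.exp (1/60))⁻¹ := by
        rw [← Real.exp_neg]; norm_num
      rw [hr, h2]
      rw [inv_le_comm₀ (by positivity) (by norm_num)]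
      linarith
    have hexp_r : ∀ i : ℕ, Real.exp (-((i:ℝ)+1)/60) ≤ r^i := by
      intro i
      have h1 : r^(i+1) = Real.exp (-((i:ℝ)+1)/60) := by
        rw [hr, ← Real.exp_nat_mul]
        congr 1
        push_cast
        ring
      have h2 : r^(i+1) ≤ r^i := pow_le_pow_of_le_one hr0 (by linarith) (by omega)
      linarith [h1 ▸ h2]
    have hgeom : ∑ i ∈ Finset.range N, r^i ≤ 120 := by
      set G := ∑ i ∈ Finset.range N, r^i with hG
      have hG0 : 0 ≤ G := Finset.sum_nonneg fun i _ => pow_nonneg hr0 i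
      have h1 : G * (1 - r) = 1 - r^N := by
        have h := geom_sum_mul r N
        linear_combination -h
      have h2 : G * (1/120) ≤ G * (1 - r) := mul_le_mul_of_nonneg_left (by linarith) hG0
      have h3 : (0:ℝ) ≤ r^N := pow_nonneg hr0 N
      linarith
    have hsum1 : ∑ i ∈ Finset.range N, triWalkProb (i+1) y
        ≤ ∑ i ∈ Finset.range N, (112.5/(Q:ℝ) + r^i) := by
      apply Finset.sum_le_sum
      intro i _
      exact le_trans (hterm i) (by linarith [hexp_r i])
    have hsum2 : ∑ i ∈ Finset.range N, (112.5/(Q:ℝ) + r^i)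
        = N * (112.5/(Q:ℝ)) + ∑ i ∈ Finset.range N, r^i := by
      rw [Finset.sum_add_distrib, Finset.sum_const, Finset.card_range]
      push_cast
      ring
    have hNQ : (N:ℝ) * (112.5/(Q:ℝ)) ≤ 112.5 := by
      rw [hNR]
      apply le_of_eq
      field_simp
    have h0 : triWalkProb 0 y ≤ 1 := triWalkProb_le_one 0 y
    calc (∑ i ∈ Finset.range N, triWalkProb (i+1) y) + triWalkProb 0 y
        ≤ (N * (112.5/(Q:ℝ)) + ∑ i ∈ Finset.range N, r^i) + 1 := by
          have := hsum1
          rw [hsum2] at this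
          linarith
      _ ≤ (112.5 + 120) + 1 := by linarith
      _ ≤ 300 := by norm_num
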